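/- Let (A, H, D) be a σ-spectral triple with D^{-1} ∈ L^{n,∞} and let Tr_ω be a Dixmier trace. Then φ(a) := Tr_ω(a D^{-n}) is a σ^{-n}-trace on A: φ(ab) = φ(b σ^{-n}(a)) for all a, b ∈ A. More generally Tr_ω(T σ^{-n}(a) D^{-n}) = Tr_ω(a T D^{-n}) for every bounded operator T. -/

import Mathlib

set_option synthInstance.maxHeartbeats 400000
set_option linter.unusedSectionVars false
set_option maxHeartbeats 1000000

variable {H : Type*} [NormedAddCommGroup H] [InnerProductSpace ℂ H] [CompleteSpace H]

/-- The `k`-th approximation number of a bounded operator. -/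
noncomputable def approxNum (k : ℕ) (T : H →L[ℂ] H) : ℝ :=
  sInf {r : ℝ | ∃ F : H →L[ℂ] H,
    LinearMap.rank (F : H →ₗ[ℂ] H) ≤ (k : Cardinal) ∧ r = ‖T - F‖}

/-- Membership in the weak Schatten ideal `L^{n,∞}`. -/
def MemWeakSchatten (n : ℕ) (T : H →L[ℂ] H) : Prop :=
  IsCompactOperator T ∧
    ∃ C : ℝ, ∀ k : ℕ, approxNum k T ≤ C * ((k : ℝ) + 1) ^ (-(1 : ℝ) / n)

/-- Membership in `L_0^{p,∞}` (singular values `o(j^{-1/p})`); a Dixmier trace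
vanishes on `L_0^{1,∞}`. -/
def MemWeakSchattenLittle (p : ℝ) (T : H →L[ℂ] H) : Prop :=
  IsCompactOperator T ∧
    Filter.Tendsto (fun j : ℕ => approxNum j T * ((j : ℝ) + 1) ^ ((1 : ℝ) / p))
      Filter.atTop (nhds 0)


namespace ANaux

def ANset (k : ℕ) (T : H →L[ℂ] H) : Set ℝ :=
  {r : ℝ | ∃ F : H →L[ℂ] H,
    LinearMap.rank (F : H →ₗ[ℂ] H) ≤ (k : Cardinal) ∧ r = ‖T - F‖}

lemma approxNum_eq (k : ℕ) (T : H →L[ℂ] H) : approxNum k T = sInf (ANset k T) := rfl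

lemma ANset_nonempty (k : ℕ) (T : H →L[ℂ] H) : (ANset k T).Nonempty :=
  ⟨‖T - 0‖, 0, by simp, rfl⟩

lemma ANset_bddBelow (k : ℕ) (T : H →L[ℂ] H) : BddBelow (ANset k T) :=
  ⟨0, by rintro r ⟨F, -, rfl⟩; exact norm_nonneg _⟩

lemma approxNum_nonneg (k : ℕ) (T : H →L[ℂ] H) : 0 ≤ approxNum k T :=
  le_csInf (ANset_nonempty k T) (by rintro r ⟨F, -, rfl⟩; exact norm_nonneg _)

lemma approxNum_le {k : ℕ} (T F : H →L[ℂ] H)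
    (hF : LinearMap.rank (F : H →ₗ[ℂ] H) ≤ (k : Cardinal)) :
    approxNum k T ≤ ‖T - F‖ :=
  csInf_le (ANset_bddBelow k T) ⟨F, hF, rfl⟩

lemma approxNum_le_norm (k : ℕ) (T : H →L[ℂ] H) : approxNum k T ≤ ‖T‖ := by
  simpa using approxNum_le T 0 (by simp)

lemma approxNum_antitone {j k : ℕ} (h : j ≤ k) (T : H →L[ℂ] H) :
    approxNum k T ≤ approxNum j T :=
  csInf_le_csInf (ANset_bddBelow k T) (ANset_nonempty j T)
    (by rintro r ⟨F, hF, rfl⟩; exact ⟨F, hF.trans (by exact_mod_cast Nat.cast_le.2 h), rfl⟩)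

lemma exists_near (k : ℕ) (T : H →L[ℂ] H) {ε : ℝ} (hε : 0 < ε) :
    ∃ F : H →L[ℂ] H, LinearMap.rank (F : H →ₗ[ℂ] H) ≤ (k : Cardinal) ∧
      ‖T - F‖ < approxNum k T + ε := by
  obtain ⟨r, ⟨F, hF, rfl⟩, hr⟩ := Real.lt_sInf_add_pos (ANset_nonempty k T) hε
  exact ⟨F, hF, hr⟩

lemma approxNum_zero_op (k : ℕ) : approxNum k (0 : H →L[ℂ] H) = 0 :=
  le_antisymm (by simpa using approxNum_le_norm (H := H) k 0) (approxNum_nonneg _ _)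

lemma approxNum_neg (k : ℕ) (T : H →L[ℂ] H) : approxNum k (-T) = approxNum k T := by
  have hset : ∀ S : H →L[ℂ] H, ANset k (-S) ⊆ ANset k S := by
    rintro S r ⟨F, hF, rfl⟩
    refine ⟨-F, ?_, ?_⟩
    · rwa [ContinuousLinearMap.coe_neg, LinearMap.rank, LinearMap.range_neg]
    · rw [show S - -F = -(-S - F) by abel, norm_neg]
  refine le_antisymm
    (csInf_le_csInf (ANset_bddBelow _ _) (ANset_nonempty _ _) ?_)
    (csInf_le_csInf (ANset_bddBelow _ _) (ANset_nonempty _ _) (hset T))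
  have := hset (-T)
  rwa [neg_neg] at this

end ANaux

namespace ANaux

lemma le_mul_of_forall_eps {a x y : ℝ} (hx : 0 ≤ x) (hy : 0 ≤ y)
    (h : ∀ ε : ℝ, 0 < ε → a ≤ (x + ε) * (y + ε)) : a ≤ x * y := by
  by_contra hc
  push_neg at hc
  set ε := min 1 ((a - x * y) / (2 * (x + y + 2))) with hεdef
  have hd : 0 < (a - x * y) / (2 * (x + y + 2)) := by
    apply div_pos <;> linarith
  have hε : 0 < ε := lt_min one_pos hd
  have h1 : ε ≤ 1 := min_le_left _ _
  have h2 : ε ≤ (a - x * y) / (2 * (x + y + 2)) := min_le_right _ _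
  have h2' : ε * (2 * (x + y + 2)) ≤ a - x * y := by
    rw [← le_div_iff₀ (by linarith)]; exact h2
  have := h ε hε
  nlinarith [mul_pos hε hε, hε.le]

lemma approxNum_mul_le (j k : ℕ) (S T : H →L[ℂ] H) :
    approxNum (j + k) (S * T) ≤ approxNum j S * approxNum k T := by
  refine le_mul_of_forall_eps (approxNum_nonneg _ _) (approxNum_nonneg _ _) fun ε hε => ?_
  obtain ⟨F, hF, hFn⟩ := exists_near j S hε
  obtain ⟨G, hG, hGn⟩ := exists_near k T hε
  have hrank : LinearMap.rank ((F * T + (S - F) * G : H →L[ℂ] H) : H →ₗ[ℂ] H)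
      ≤ ((j + k : ℕ) : Cardinal) := by
    rw [ContinuousLinearMap.coe_add]
    refine (LinearMap.rank_add_le _ _).trans ?_
    rw [Nat.cast_add]
    refine add_le_add ?_ ?_
    · rw [ContinuousLinearMap.mul_def, ContinuousLinearMap.toLinearMap_comp]
      exact (LinearMap.rank_comp_le_left _ _).trans hF
    · rw [ContinuousLinearMap.mul_def, ContinuousLinearMap.toLinearMap_comp]
      refine le_trans ?_ hG
      exact LinearMap.rank_comp_le_right _ _
  have hdiff : S * T - (F * T + (S - F) * G) = (S - F) * (T - G) := by noncomm_ring
  calc approxNum (j + k) (S * T) ≤ ‖S * T - (F * T + (S - F) * G)‖ := approxNum_le _ _ hrank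
    _ = ‖(S - F) * (T - G)‖ := by rw [hdiff]
    _ ≤ ‖S - F‖ * ‖T - G‖ := norm_mul_le _ _
    _ ≤ (approxNum j S + ε) * (approxNum k T + ε) := by
        apply mul_le_mul hFn.le hGn.le (norm_nonneg _)
        have := approxNum_nonneg j S; linarith

lemma approxNum_add_le (j k : ℕ) (S T : H →L[ℂ] H) :
    approxNum (j + k) (S + T) ≤ approxNum j S + approxNum k T := by
  refine le_of_forall_pos_le_add fun ε hε => ?_
  obtain ⟨F, hF, hFn⟩ := exists_near j S (half_pos hε)
  obtain ⟨G, hG, hGn⟩ := exists_near k T (half_pos hε)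
  have hrank : LinearMap.rank ((F + G : H →L[ℂ] H) : H →ₗ[ℂ] H)
      ≤ ((j + k : ℕ) : Cardinal) := by
    rw [ContinuousLinearMap.coe_add, Nat.cast_add]
    exact (LinearMap.rank_add_le _ _).trans (add_le_add hF hG)
  calc approxNum (j + k) (S + T) ≤ ‖S + T - (F + G)‖ := approxNum_le _ _ hrank
    _ = ‖(S - F) + (T - G)‖ := by congr 1; abel
    _ ≤ ‖S - F‖ + ‖T - G‖ := norm_add_le _ _
    _ ≤ approxNum j S + approxNum k T + ε := by linarith

lemma approxNum_sub_le (j k : ℕ) (S T : H →L[ℂ] H) :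
    approxNum (j + k) (S - T) ≤ approxNum j S + approxNum k T := by
  rw [sub_eq_add_neg]
  simpa [approxNum_neg] using approxNum_add_le j k S (-T)

end ANaux

namespace ANaux

def ANBound (C p : ℝ) (T : H →L[ℂ] H) : Prop :=
  ∀ k : ℕ, approxNum k T ≤ C * ((k : ℝ) + 1) ^ (-p)

lemma rpow_half_le {s : ℝ} (hs : 0 ≤ s) {k m : ℕ} (h : (m : ℝ) + 1 ≤ 2 * ((k : ℝ) + 1)) :
    ((k : ℝ) + 1) ^ (-s) ≤ 2 ^ s * ((m : ℝ) + 1) ^ (-s) := by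
  have hk : (0:ℝ) < (k : ℝ) + 1 := by positivity
  have hm : (0:ℝ) < (m : ℝ) + 1 := by positivity
  have hks : (0:ℝ) < ((k : ℝ) + 1) ^ s := Real.rpow_pos_of_pos hk s
  have hms : (0:ℝ) < ((m : ℝ) + 1) ^ s := Real.rpow_pos_of_pos hm s
  have key : ((m : ℝ) + 1) ^ s ≤ 2 ^ s * ((k : ℝ) + 1) ^ s := by
    rw [← Real.mul_rpow (by norm_num) hk.le]
    exact Real.rpow_le_rpow hm.le h hs
  rw [Real.rpow_neg hk.le, Real.rpow_neg hm.le, mul_comm, ← div_eq_inv_mul, ← one_div,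
    div_le_div_iff₀ hks hms]
  nlinarith [hks.le, hms.le]

lemma anBound_mul {C C' p q : ℝ} {S T : H →L[ℂ] H} (hC : 0 ≤ C) (hC' : 0 ≤ C')
    (hp : 0 ≤ p) (hq : 0 ≤ q) (hS : ANBound C p S) (hT : ANBound C' q T) :
    ANBound (2 ^ (p + q) * (C * C')) (p + q) (S * T) := by
  intro m
  set k := m / 2 with hk
  have hle : k + k ≤ m := by omega
  have hhalf : (m : ℝ) + 1 ≤ 2 * ((k : ℝ) + 1) := by
    have h2 : m ≤ 2 * k + 1 := by omega
    have := (Nat.cast_le (α := ℝ)).2 h2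
    push_cast at this ⊢; linarith
  have hkpos : (0:ℝ) < (k : ℝ) + 1 := by positivity
  calc approxNum m (S * T) ≤ approxNum (k + k) (S * T) := approxNum_antitone hle _
    _ ≤ approxNum k S * approxNum k T := approxNum_mul_le k k S T
    _ ≤ (C * ((k : ℝ) + 1) ^ (-p)) * (C' * ((k : ℝ) + 1) ^ (-q)) := by
        apply mul_le_mul (hS k) (hT k) (approxNum_nonneg _ _)
        positivity
    _ = (C * C') * ((k : ℝ) + 1) ^ (-(p + q)) := by
        rw [neg_add, Real.rpow_add hkpos]; ring
    _ ≤ (C * C') * (2 ^ (p + q) * ((m : ℝ) + 1) ^ (-(p + q))) := by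
        apply mul_le_mul_of_nonneg_left (rpow_half_le (by linarith) hhalf) (by positivity)
    _ = 2 ^ (p + q) * (C * C') * ((m : ℝ) + 1) ^ (-(p + q)) := by ring

lemma anBound_sub {C C' p : ℝ} {S T : H →L[ℂ] H} (hC : 0 ≤ C) (hC' : 0 ≤ C')
    (hp : 0 ≤ p) (hS : ANBound C p S) (hT : ANBound C' p T) :
    ANBound (2 ^ p * (C + C')) p (S - T) := by
  intro m
  set k := m / 2 with hk
  have hle : k + k ≤ m := by omega
  have hhalf : (m : ℝ) + 1 ≤ 2 * ((k : ℝ) + 1) := by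
    have h2 : m ≤ 2 * k + 1 := by omega
    have := (Nat.cast_le (α := ℝ)).2 h2
    push_cast at this ⊢; linarith
  calc approxNum m (S - T) ≤ approxNum (k + k) (S - T) := approxNum_antitone hle _
    _ ≤ approxNum k S + approxNum k T := approxNum_sub_le k k S T
    _ ≤ C * ((k : ℝ) + 1) ^ (-p) + C' * ((k : ℝ) + 1) ^ (-p) := add_le_add (hS k) (hT k)
    _ = (C + C') * ((k : ℝ) + 1) ^ (-p) := by ring
    _ ≤ (C + C') * (2 ^ p * ((m : ℝ) + 1) ^ (-p)) := by
        apply mul_le_mul_of_nonneg_left (rpow_half_le hp hhalf) (by linarith)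
    _ = 2 ^ p * (C + C') * ((m : ℝ) + 1) ^ (-p) := by ring

lemma anBound_of_norm (T : H →L[ℂ] H) : ANBound ‖T‖ 0 T := by
  intro k
  simpa using approxNum_le_norm k T

lemma anBound_zero_op (p : ℝ) : ANBound 0 p (0 : H →L[ℂ] H) := by
  intro k
  rw [approxNum_zero_op, zero_mul]

lemma anBound_congr_exp {C p q : ℝ} {T : H →L[ℂ] H} (h : ANBound C p T) (hpq : p = q) :
    ANBound C q T := hpq ▸ h

end ANaux

namespace ANaux

lemma memWS1_of_anBound {C : ℝ} {T : H →L[ℂ] H} (hcp : IsCompactOperator T)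
    (h : ANBound C 1 T) : MemWeakSchatten 1 T := by
  refine ⟨hcp, C, fun k => ?_⟩
  have := h k
  rwa [show (-(1:ℝ) / (1:ℕ)) = -1 by norm_num]

lemma little_of_anBound {C p : ℝ} {T : H →L[ℂ] H} (hcp : IsCompactOperator T)
    (hp : 1 < p) (h : ANBound C p T) : MemWeakSchattenLittle 1 T := by
  refine ⟨hcp, ?_⟩
  have hub : ∀ j : ℕ, approxNum j T * ((j : ℝ) + 1) ^ ((1:ℝ) / 1)
      ≤ C * ((j : ℝ) + 1) ^ (1 - p) := by
    intro j
    have hj : (0:ℝ) < (j : ℝ) + 1 := by positivity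
    have h1 : ((j : ℝ) + 1) ^ ((1:ℝ)/1) = ((j : ℝ) + 1) ^ (1:ℝ) := by norm_num
    calc approxNum j T * ((j : ℝ) + 1) ^ ((1:ℝ)/1)
        ≤ (C * ((j : ℝ) + 1) ^ (-p)) * ((j : ℝ) + 1) ^ ((1:ℝ)/1) := by
          apply mul_le_mul_of_nonneg_right (h j) (by positivity)
      _ = C * ((j : ℝ) + 1) ^ (1 - p) := by
          rw [h1, mul_assoc, ← Real.rpow_add hj]; ring_nf
  have hlb : ∀ j : ℕ, 0 ≤ approxNum j T * ((j : ℝ) + 1) ^ ((1:ℝ) / 1) := by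
    intro j
    have := approxNum_nonneg j T
    positivity
  refine squeeze_zero hlb hub ?_
  have h0 : Filter.Tendsto (fun j : ℕ => ((j : ℝ) + 1) ^ (1 - p)) Filter.atTop (nhds 0) := by
    have h1 : Filter.Tendsto (fun j : ℕ => ((j : ℝ) + 1)) Filter.atTop Filter.atTop :=
      Filter.tendsto_atTop_add_const_right _ 1 tendsto_natCast_atTop_atTop
    have h2 : Filter.Tendsto (fun x : ℝ => x ^ (-(p - 1))) Filter.atTop (nhds 0) :=
      tendsto_rpow_neg_atTop (by linarith)
    have := h2.comp h1
    simpa [Function.comp_def, show -(p-1) = 1 - p by ring] using this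
  simpa using h0.const_mul C

lemma isCompact_mul_right {S T : H →L[ℂ] H} (hS : IsCompactOperator S) :
    IsCompactOperator (S * T) := by
  rw [ContinuousLinearMap.mul_def]
  have := hS.comp_clm T
  rwa [show (⇑S ∘ ⇑T) = ⇑(S.comp T) by rfl] at this

lemma isCompact_mul_left {S T : H →L[ℂ] H} (hT : IsCompactOperator T) :
    IsCompactOperator (S * T) := by
  rw [ContinuousLinearMap.mul_def]
  have := hT.clm_comp S
  rwa [show (⇑S ∘ ⇑T) = ⇑(S.comp T) by rfl] at this

lemma isCompact_sub {S T : H →L[ℂ] H} (hS : IsCompactOperator S)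
    (hT : IsCompactOperator T) : IsCompactOperator (S - T) := by
  have := hS.sub hT
  rwa [show (⇑S - ⇑T) = ⇑(S - T) by rw [ContinuousLinearMap.coe_sub']] at this

/-- Powers of an operator in `L^{n,∞}`. -/
lemma anBound_pow {n : ℕ} {C : ℝ} {S : H →L[ℂ] H} (hC : 0 ≤ C)
    (hS : ANBound C ((1:ℝ)/n) S) (m : ℕ) :
    ∃ Cm : ℝ, 0 ≤ Cm ∧ ANBound Cm ((m : ℝ)/n) (S ^ m) := by
  induction m with
  | zero =>
      refine ⟨‖(1 : H →L[ℂ] H)‖, norm_nonneg _, ?_⟩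
      rw [pow_zero]
      exact anBound_congr_exp (anBound_of_norm 1) (by norm_num)
  | succ m ih =>
      obtain ⟨Cm, hCm, hANm⟩ := ih
      refine ⟨2 ^ ((1:ℝ)/n + (m:ℝ)/n) * (C * Cm), by positivity, ?_⟩
      rw [pow_succ']
      refine anBound_congr_exp (anBound_mul hC hCm (by positivity) (by positivity) hS hANm) ?_
      push_cast
      by_cases hn : (n:ℝ) = 0
      · simp [hn]
      · field_simp; ring

end ANaux

/-- for a `σ`-spectral triple `(A, H, D)` with `D^{-1} ∈ L^{n,∞}`
and a Dixmier trace `Tr_ω` (abstracted as a linear functional `τ` which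
vanishes on `L_0^{1,∞}` and has the trace property against `L^{1,∞}`), the
functional `φ(a) = Tr_ω(a D^{-n})` is a `σ^{-n}`-trace on `A`:
`φ(ab) = φ(b σ^{-n}(a))`; more generally,
`Tr_ω(T σ^{-n}(a) D^{-n}) = Tr_ω(a T D^{-n})` for every bounded `T`. -/
theorem dixmier_sigma_trace
    (A : Subalgebra ℂ (H →L[ℂ] H)) (σ : A ≃ₐ[ℂ] A)
    (D : H →ₗ[ℂ] H) (Dinv : H →L[ℂ] H)
    (hD1 : D ∘ₗ (Dinv : H →ₗ[ℂ] H) = LinearMap.id)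
    (hD2 : (Dinv : H →ₗ[ℂ] H) ∘ₗ D = LinearMap.id)
    (htw : ∀ a : A, ∃ T : H →L[ℂ] H, (T : H →ₗ[ℂ] H)
      = D ∘ₗ ((a : H →L[ℂ] H) : H →ₗ[ℂ] H)
        - (((σ a : A) : H →L[ℂ] H) : H →ₗ[ℂ] H) ∘ₗ D)
    (n : ℕ) (hn : 0 < n) (hDn : MemWeakSchatten n Dinv)
    (τ : (H →L[ℂ] H) →ₗ[ℂ] ℂ)
    (hτ0 : ∀ T : H →L[ℂ] H, MemWeakSchattenLittle 1 T → τ T = 0)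
    (hτtr : ∀ S T : H →L[ℂ] H, MemWeakSchatten 1 T → τ (S * T) = τ (T * S)) :
    -- general form: `Tr_ω(T σ^{-n}(a) D^{-n}) = Tr_ω(a T D^{-n})`
    (∀ (a : A) (T : H →L[ℂ] H),
        τ (T * (((σ⁻¹ ^ n) a : A) : H →L[ℂ] H) * Dinv ^ n)
          = τ ((a : H →L[ℂ] H) * T * Dinv ^ n))
    -- `σ^{-n}`-trace property: `φ(ab) = φ(b σ^{-n}(a))`
    ∧ (∀ a b : A,
        τ (((a * b : A) : H →L[ℂ] H) * Dinv ^ n)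
          = τ ((b : H →L[ℂ] H) * (((σ⁻¹ ^ n) a : A) : H →L[ℂ] H) * Dinv ^ n)) := by
  classical
  obtain ⟨hcpD, C, hC⟩ := hDn
  have hnR : (0:ℝ) < (n : ℝ) := by exact_mod_cast hn
  have hnne : (n : ℝ) ≠ 0 := ne_of_gt hnR
  have hC0 : 0 ≤ C := by
    have h1 := hC 0
    have h2 := ANaux.approxNum_nonneg 0 Dinv
    simp only [Nat.cast_zero, zero_add, Real.one_rpow] at h1
    linarith
  have hAND : ANaux.ANBound C ((1:ℝ)/n) Dinv := by
    intro k
    have := hC k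
    rwa [neg_div] at this
  have hDD : ∀ x : H, Dinv (D x) = x := fun x => LinearMap.congr_fun hD2 x
  have hDD' : ∀ x : H, D (Dinv x) = x := fun x => LinearMap.congr_fun hD1 x
  -- the key commutation estimate
  have key : ∀ (a : A) (m : ℕ), ∃ Cm : ℝ, 0 ≤ Cm ∧
      ANaux.ANBound Cm (((m:ℝ)+1)/n)
        (Dinv ^ m * ((a : H →L[ℂ] H)) - (((σ⁻¹ ^ m) a : A) : H →L[ℂ] H) * Dinv ^ m) := by
    intro a m
    induction m with
    | zero =>
        refine ⟨0, le_refl 0, ?_⟩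
        have h0 : Dinv ^ 0 * ((a : H →L[ℂ] H)) - (((σ⁻¹ ^ 0) a : A) : H →L[ℂ] H) * Dinv ^ 0
            = 0 := by
          simp [pow_zero]
        rw [h0]
        exact ANaux.anBound_zero_op _
    | succ m ih =>
        obtain ⟨Cm, hCm0, hANm⟩ := ih
        obtain ⟨T, hT⟩ := htw ((σ⁻¹ ^ (m+1)) a)
        have hσa : σ ((σ⁻¹ ^ (m+1)) a) = (σ⁻¹ ^ m) a := by
          have hgrp : σ * σ⁻¹ ^ (m+1) = σ⁻¹ ^ m := by group
          rw [← AlgEquiv.mul_apply, hgrp]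
        rw [hσa] at hT
        have hTapp : ∀ y : H, T y
            = D (((((σ⁻¹ ^ (m+1)) a : A) : H →L[ℂ] H)) y)
              - ((((σ⁻¹ ^ m) a : A) : H →L[ℂ] H)) (D y) := fun y => LinearMap.congr_fun hT y
        have hDTD : Dinv * T * Dinv
            = (((σ⁻¹ ^ (m+1)) a : A) : H →L[ℂ] H) * Dinv
              - Dinv * (((σ⁻¹ ^ m) a : A) : H →L[ℂ] H) := by
          ext x
          simp only [ContinuousLinearMap.mul_apply, ContinuousLinearMap.sub_apply]
          rw [hTapp (Dinv x), hDD' x, map_sub, hDD]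
        have hiden : Dinv ^ (m+1) * ((a : H →L[ℂ] H))
            - (((σ⁻¹ ^ (m+1)) a : A) : H →L[ℂ] H) * Dinv ^ (m+1)
            = Dinv * (Dinv ^ m * ((a : H →L[ℂ] H))
                - (((σ⁻¹ ^ m) a : A) : H →L[ℂ] H) * Dinv ^ m)
              - (Dinv * T) * Dinv ^ (m+1) := by
          have hp : Dinv ^ (m+1) = Dinv * Dinv ^ m := pow_succ' Dinv m
          have h2 : (Dinv * T) * Dinv ^ (m+1) = (Dinv * T * Dinv) * Dinv ^ m := by
            rw [hp]; noncomm_ring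
          rw [h2, hDTD, hp]; noncomm_ring
        -- bounds
        obtain ⟨Pm, hPm0, hPm⟩ := ANaux.anBound_pow hC0 hAND (m+1)
        have hPm' : ANaux.ANBound Pm (((m:ℝ)+1)/n) (Dinv ^ (m+1)) :=
          ANaux.anBound_congr_exp hPm (by push_cast; ring)
        have hb1 : ANaux.ANBound (2 ^ ((1:ℝ)/n + ((m:ℝ)+1)/n) * (C * Cm))
            ((1:ℝ)/n + ((m:ℝ)+1)/n)
            (Dinv * (Dinv ^ m * ((a : H →L[ℂ] H))
              - (((σ⁻¹ ^ m) a : A) : H →L[ℂ] H) * Dinv ^ m)) :=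
          ANaux.anBound_mul hC0 hCm0 (by positivity) (by positivity) hAND hANm
        have hb2a : ANaux.ANBound (2 ^ ((1:ℝ)/n + 0) * (C * ‖T‖)) ((1:ℝ)/n + 0)
            (Dinv * T) :=
          ANaux.anBound_mul hC0 (norm_nonneg T) (by positivity) le_rfl hAND
            (ANaux.anBound_of_norm T)
        have hb2 : ANaux.ANBound
            (2 ^ (((1:ℝ)/n + 0) + ((m:ℝ)+1)/n) * ((2 ^ ((1:ℝ)/n + 0) * (C * ‖T‖)) * Pm))
            (((1:ℝ)/n + 0) + ((m:ℝ)+1)/n) ((Dinv * T) * Dinv ^ (m+1)) :=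
          ANaux.anBound_mul (by positivity) hPm0 (by positivity) (by positivity) hb2a hPm'
        have hb1' := ANaux.anBound_congr_exp hb1
          (show (1:ℝ)/n + ((m:ℝ)+1)/n = ((m:ℝ)+1+1)/n by field_simp; ring)
        have hb2' := ANaux.anBound_congr_exp hb2
          (show ((1:ℝ)/n + 0) + ((m:ℝ)+1)/n = ((m:ℝ)+1+1)/n by field_simp; ring)
        have hc1 : (0:ℝ) ≤ 2 ^ ((1:ℝ)/n + ((m:ℝ)+1)/n) * (C * Cm) :=
          mul_nonneg (by positivity) (mul_nonneg hC0 hCm0)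
        have hc2 : (0:ℝ) ≤ 2 ^ (((1:ℝ)/n + 0) + ((m:ℝ)+1)/n)
            * ((2 ^ ((1:ℝ)/n + 0) * (C * ‖T‖)) * Pm) :=
          mul_nonneg (by positivity)
            (mul_nonneg (mul_nonneg (by positivity) (mul_nonneg hC0 (norm_nonneg T))) hPm0)
        have hsub := ANaux.anBound_sub hc1 hc2 (by positivity) hb1' hb2'
        rw [← hiden] at hsub
        exact ⟨_, mul_nonneg (by positivity) (add_nonneg hc1 hc2),
          ANaux.anBound_congr_exp hsub (by push_cast; ring)⟩
  -- compactness facts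
  have hcpDn : IsCompactOperator ⇑(Dinv ^ n) := by
    cases n with
    | zero => exact absurd hn (by simp)
    | succ n' => rw [pow_succ']; exact ANaux.isCompact_mul_right hcpD
  -- main statement
  have main : ∀ (a : A) (T : H →L[ℂ] H),
      τ (T * (((σ⁻¹ ^ n) a : A) : H →L[ℂ] H) * Dinv ^ n)
        = τ ((a : H →L[ℂ] H) * T * Dinv ^ n) := by
    intro a T
    obtain ⟨Cn, hCn0, hANn⟩ := key a n
    set Ac := ((a : H →L[ℂ] H)) with hAc
    set Bn := (((σ⁻¹ ^ n) a : A) : H →L[ℂ] H) with hBn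
    set R := Dinv ^ n * Ac - Bn * Dinv ^ n with hRdef
    have hcpR : IsCompactOperator ⇑R :=
      ANaux.isCompact_sub (ANaux.isCompact_mul_right hcpDn) (ANaux.isCompact_mul_left hcpDn)
    have hexp : (1:ℝ) < 0 + ((n:ℝ)+1)/n := by
      rw [zero_add, lt_div_iff₀ hnR]; linarith
    have hTR : MemWeakSchattenLittle 1 (T * R) :=
      ANaux.little_of_anBound (ANaux.isCompact_mul_left hcpR) hexp
        (ANaux.anBound_mul (norm_nonneg T) hCn0 le_rfl (by positivity)
          (ANaux.anBound_of_norm T) hANn)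
    have hτTR : τ (T * R) = 0 := hτ0 _ hTR
    have h1 : T * Bn * Dinv ^ n = T * (Dinv ^ n * Ac) - T * R := by
      rw [hRdef]; noncomm_ring
    have h2 : τ (T * Bn * Dinv ^ n) = τ (T * (Dinv ^ n * Ac)) := by
      rw [h1, map_sub, hτTR, sub_zero]
    have hmem : MemWeakSchatten 1 (T * Dinv ^ n) := by
      obtain ⟨Pn, hPn0, hPn⟩ := ANaux.anBound_pow hC0 hAND n
      refine ANaux.memWS1_of_anBound (ANaux.isCompact_mul_left hcpDn)
        (ANaux.anBound_congr_exp
          (ANaux.anBound_mul (norm_nonneg T) hPn0 le_rfl (by positivity)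
            (ANaux.anBound_of_norm T) hPn) ?_)
      field_simp; norm_num
    have h3 : τ (Ac * (T * Dinv ^ n)) = τ ((T * Dinv ^ n) * Ac) := hτtr Ac _ hmem
    calc τ (T * Bn * Dinv ^ n) = τ (T * (Dinv ^ n * Ac)) := h2
      _ = τ ((T * Dinv ^ n) * Ac) := by rw [← mul_assoc, mul_assoc]
      _ = τ (Ac * (T * Dinv ^ n)) := h3.symm
      _ = τ (Ac * T * Dinv ^ n) := by rw [mul_assoc]
  refine ⟨main, fun a b => ?_⟩
  have h := (main a ((b : H →L[ℂ] H))).symm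
  rw [show ((a * b : A) : H →L[ℂ] H) = (a : H →L[ℂ] H) * (b : H →L[ℂ] H) from rfl]
  exact h
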